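/- Fix integers n ≥ T ≥ 1 and a filter f : Fin T → ℝ. Define the autocorrelations c_i := Σ_{k=0}^{T−1−i} f_k · f_{k+i} for 0 ≤ i ≤ T−1 (so c₀ = Σ_{k=0}^{T−1} f_k² = ‖f‖₂²), and for an integer j define q_j := c₀ + 2·Σ_{i=1}^{T−1} c_i · cos(2π·j·i/n). Then for all integers j and t, q_j − q_t ≤ 2π · ‖f‖₂² · T² · |t − j| / n. -/

import Mathlib

open Finset Real

/-- **Pairwise gap of squared singular values** (from the proof of Lemma A.1): for
`q j = c₀ + 2 ∑_{i=1}^{T-1} cᵢ cos(2πji/n)`, the squared singular values of a single-channel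
circular convolution with filter `f` of length `T` on inputs of length `n`, one has
`q j − q t ≤ 2π ‖f‖₂² T² |t − j| / n` for all integer Fourier indices `j, t`. -/
theorem conv_sq_singular_fourier_gap (n T : ℕ) (hT : 1 ≤ T) (hn : T ≤ n) (f : Fin T → ℝ)
    (F : ℕ → ℝ) (hF : ∀ m (h : m < T), F m = f ⟨m, h⟩) (hF0 : ∀ m, T ≤ m → F m = 0)
    (c : ℕ → ℝ) (hc : ∀ i ≤ T - 1, c i = ∑ k ∈ Finset.range (T - i), F k * F (k + i))
    (q : ℤ → ℝ)
    (hq : ∀ j : ℤ, q j = c 0 + 2 * ∑ i ∈ Finset.Icc 1 (T - 1),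
      c i * Real.cos (2 * π * j * i / n)) :
    ∀ j t : ℤ, q j - q t ≤
      2 * π * (∑ k, f k ^ 2) * (T : ℝ) ^ 2 * (|t - j| : ℤ) / n := by
  intro j t
  set a : ℝ := ((|t - j| : ℤ) : ℝ) with ha
  have ha0 : 0 ≤ a := by rw [ha]; exact_mod_cast abs_nonneg (t - j)
  have hn1 : 1 ≤ n := le_trans hT hn
  have hnR : (0:ℝ) < n := by exact_mod_cast hn1
  have hc0 : c 0 = ∑ k ∈ Finset.range T, F k ^ 2 := by
    rw [hc 0 (Nat.zero_le _)]
    simp [sq]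
  have hc0nonneg : 0 ≤ c 0 := by rw [hc0]; positivity
  have hfc : (∑ k, f k ^ 2) = c 0 := by
    rw [hc0, ← Fin.sum_univ_eq_sum_range (fun k => F k ^ 2) T]
    refine Finset.sum_congr rfl fun k _ => ?_
    rw [hF k.val k.isLt]
  have hcb : ∀ i ∈ Finset.Icc 1 (T-1), |c i| ≤ c 0 := by
    intro i hi
    obtain ⟨hi1, hi2⟩ := Finset.mem_Icc.mp hi
    have h1 : ∑ k ∈ Finset.range (T - i), F k ^ 2 ≤ c 0 := by
      rw [hc0]
      apply Finset.sum_le_sum_of_subset_of_nonneg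
      · exact Finset.range_subset_range.mpr (Nat.sub_le _ _)
      · intros; positivity
    have h2 : ∑ k ∈ Finset.range (T - i), F (k + i) ^ 2 ≤ c 0 := by
      have e : ∑ k ∈ Finset.range (T - i), F (k + i) ^ 2
          = ∑ m ∈ Finset.Ico i T, F m ^ 2 := by
        rw [Finset.sum_Ico_eq_sum_range]
        exact Finset.sum_congr rfl fun k _ => by rw [Nat.add_comm]
      rw [e, hc0, Finset.range_eq_Ico]
      apply Finset.sum_le_sum_of_subset_of_nonneg
      · exact Finset.Ico_subset_Ico (Nat.zero_le _) le_rfl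
      · intros; positivity
    have hsq : c i ^ 2 ≤ c 0 ^ 2 := by
      rw [hc i hi2]
      calc (∑ k ∈ Finset.range (T-i), F k * F (k+i))^2
          ≤ (∑ k ∈ Finset.range (T-i), F k ^2) * (∑ k ∈ Finset.range (T-i), F (k+i)^2) :=
            Finset.sum_mul_sq_le_sq_mul_sq _ _ _
        _ ≤ c 0 * c 0 := mul_le_mul h1 h2 (by positivity) hc0nonneg
        _ = c 0 ^ 2 := (sq (c 0)).symm
    calc |c i| = Real.sqrt (c i ^ 2) := (Real.sqrt_sq_eq_abs _).symm
      _ ≤ Real.sqrt (c 0 ^ 2) := Real.sqrt_le_sqrt hsq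
      _ = c 0 := by rw [Real.sqrt_sq hc0nonneg]
  have key : ∀ i ∈ Finset.Icc 1 (T-1),
      c i * (Real.cos (2*π*j*i/n) - Real.cos (2*π*t*i/n)) ≤ c 0 * (2*π*a*i/n) := by
    intro i hi
    have hbnd : 0 ≤ 2*π*a*(i:ℝ)/n := by positivity
    have hlip : ∀ x y : ℝ, |Real.cos x - Real.cos y| ≤ |x - y| := by
      intro x y
      rw [Real.cos_sub_cos, abs_mul, abs_mul]
      have s1 : |Real.sin ((x+y)/2)| ≤ 1 := abs_le.mpr ⟨Real.neg_one_le_sin _, Real.sin_le_one _⟩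
      have s2 : |Real.sin ((x-y)/2)| ≤ |x - y| / 2 := by
        have h := Real.abs_sin_le_abs (x := (x-y)/2)
        rwa [abs_div, abs_two] at h
      have h2 : (0:ℝ) ≤ |Real.sin ((x-y)/2)| := abs_nonneg _
      have h3 : |(-2:ℝ)| = 2 := by norm_num
      rw [h3]
      nlinarith [abs_nonneg (Real.sin ((x+y)/2)), abs_nonneg (x - y)]
    have habs : |Real.cos (2*π*j*i/n) - Real.cos (2*π*t*i/n)| ≤ 2*π*a*i/n := by
      have hl := hlip (2*π*j*i/n) (2*π*t*i/n)
      refine hl.trans (le_of_eq ?_)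
      have e1 : 2*π*(j:ℝ)*i/n - 2*π*(t:ℝ)*i/n = (2*π*(i:ℝ)/n) * ((j:ℝ) - (t:ℝ)) := by ring
      have e2 : |(j:ℝ) - (t:ℝ)| = a := by
        rw [ha]
        push_cast
        rw [abs_sub_comm]
      rw [e1, abs_mul, e2, abs_of_nonneg (by positivity : (0:ℝ) ≤ 2*π*(i:ℝ)/n)]
      ring
    calc c i * (Real.cos (2*π*j*i/n) - Real.cos (2*π*t*i/n))
        ≤ |c i * (Real.cos (2*π*j*i/n) - Real.cos (2*π*t*i/n))| := le_abs_self _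
      _ = |c i| * |Real.cos (2*π*j*i/n) - Real.cos (2*π*t*i/n)| := abs_mul _ _
      _ ≤ c 0 * (2*π*a*i/n) := mul_le_mul (hcb i hi) habs (abs_nonneg _) hc0nonneg
  have hq' : q j - q t = 2 * ∑ i ∈ Finset.Icc 1 (T-1),
      c i * (Real.cos (2*π*j*i/n) - Real.cos (2*π*t*i/n)) := by
    rw [hq j, hq t]
    simp_rw [mul_sub]
    rw [Finset.sum_sub_distrib]
    ring
  have hsum_i : ∑ i ∈ Finset.Icc 1 (T-1), (i:ℝ) ≤ (T:ℝ)^2 / 2 := by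
    have hN : (∑ i ∈ Finset.Icc 1 (T-1), i) * 2 ≤ T^2 := by
      have hsub : Finset.Icc 1 (T-1) ⊆ Finset.range T := by
        intro x hx
        obtain ⟨_, hx2⟩ := Finset.mem_Icc.mp hx
        exact Finset.mem_range.mpr (lt_of_le_of_lt hx2 (Nat.sub_lt hT Nat.one_pos))
      calc (∑ i ∈ Finset.Icc 1 (T-1), i) * 2
          ≤ (∑ i ∈ Finset.range T, i) * 2 := by
            exact Nat.mul_le_mul_right 2 (Finset.sum_le_sum_of_subset hsub)
        _ = T * (T - 1) := Finset.sum_range_id_mul_two T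
        _ ≤ T * T := Nat.mul_le_mul_left T (Nat.sub_le _ _)
        _ = T^2 := (sq T).symm
    have : ((∑ i ∈ Finset.Icc 1 (T-1), i : ℕ) : ℝ) * 2 ≤ ((T:ℝ))^2 := by exact_mod_cast hN
    push_cast at this
    linarith
  rw [hq', hfc]
  calc 2 * ∑ i ∈ Finset.Icc 1 (T-1), c i * (Real.cos (2*π*j*i/n) - Real.cos (2*π*t*i/n))
      ≤ 2 * ∑ i ∈ Finset.Icc 1 (T-1), c 0 * (2*π*a*i/n) := by
        have := Finset.sum_le_sum key
        linarith
    _ = 2 * ((c 0 * (2*π*a/n)) * ∑ i ∈ Finset.Icc 1 (T-1), (i:ℝ)) := by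
        rw [Finset.mul_sum, Finset.mul_sum, Finset.mul_sum]
        exact Finset.sum_congr rfl fun i _ => by ring
    _ ≤ 2 * ((c 0 * (2*π*a/n)) * ((T:ℝ)^2/2)) := by
        have hnn : 0 ≤ c 0 * (2*π*a/n) := by positivity
        nlinarith [mul_le_mul_of_nonneg_left hsum_i hnn]
    _ = 2 * π * c 0 * (T:ℝ)^2 * a / n := by ring
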